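/- There exist infinitely many quadruples (X, Y, U, V) of integers with X·Y·U·V ≠ 0 and gcd(X, Y, U, V) = 1 satisfying X⁴ + Y⁴ = 2(U⁴ + V⁴). -/

import Mathlib

/- We construct infinitely many primitive solutions of `X⁴ + Y⁴ = 2(U⁴+V⁴)` from
triples `(p, q, V)` satisfying `q⁴ = p⁴ + 6V²`, via `X = V + p², Y = V - p², U = pq`.
Such triples are produced by iterating the duplication map of the elliptic curve
`y² = 6(x⁴ - 1)`, starting from the point corresponding to `(p,q,V) = (1,7,20)`. -/

private def solStep : ℤ × ℤ × ℤ → ℤ × ℤ × ℤ := fun t =>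
  let p := t.1; let q := t.2.1; let V := t.2.2
  (p * (27*V^4 - p^8),
   q * (9*V^4 + 12*V^2*p^4 + p^8),
   V * (81*V^8 - 324*V^6*p^4 - 162*V^4*p^8 - 36*V^2*p^12 - 3*p^16))

private def solSeq : ℕ → ℤ × ℤ × ℤ
  | 0 => (1, 7, 20)
  | n+1 => solStep (solSeq n)

private structure SolInv (p q V : ℤ) : Prop where
  heq : q^4 = p^4 + 6*V^2
  hpodd : Odd p
  hVeven : Even V
  hVne : V ≠ 0
  h3 : ¬ (3:ℤ) ∣ p
  hco : IsCoprime p V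

private lemma odd_ne_zero {a : ℤ} (h : Odd a) : a ≠ 0 := by
  rcases h with ⟨k, hk⟩; omega

private lemma coprime_two {a : ℤ} (h : Odd a) : IsCoprime a 2 := by
  rcases h with ⟨k, hk⟩
  exact ⟨1, -k, by omega⟩

private lemma coprime_three {a : ℤ} (h : ¬ (3:ℤ) ∣ a) : IsCoprime a 3 := by
  have h1 : a % 3 = 1 ∨ a % 3 = 2 := by omega
  have h2 : a % 3 + 3 * (a / 3) = a := Int.emod_add_mul_ediv a 3
  rcases h1 with h1 | h1
  · exact ⟨1, -(a/3), by omega⟩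
  · exact ⟨-1, (a/3) + 1, by omega⟩

set_option maxHeartbeats 1600000 in
private lemma solStep_inv {p q V : ℤ} (h : SolInv p q V) :
    SolInv (p * (27*V^4 - p^8)) (q * (9*V^4 + 12*V^2*p^4 + p^8))
      (V * (81*V^8 - 324*V^6*p^4 - 162*V^4*p^8 - 36*V^2*p^12 - 3*p^16)) := by
  obtain ⟨heq, hpodd, hVeven, hVne, h3, hco⟩ := h
  have hVeven4 : Even (V^4) := Int.even_pow.mpr ⟨hVeven, by norm_num⟩
  -- parity facts
  have hbodd : Odd (27*V^4 - p^8) := (hVeven4.mul_left 27).sub_odd hpodd.pow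
  have hEodd : Odd (81*V^8 - 324*V^6*p^4 - 162*V^4*p^8 - 36*V^2*p^12 - 3*p^16) := by
    have e8 : Even (V^8) := Int.even_pow.mpr ⟨hVeven, by norm_num⟩
    have e6 : Even (V^6 * p^4) := (Int.even_pow.mpr ⟨hVeven, by norm_num⟩).mul_right _
    have e4 : Even (V^4 * p^8) := hVeven4.mul_right _
    have e2 : Even (V^2 * p^12) := (Int.even_pow.mpr ⟨hVeven, by norm_num⟩).mul_right _
    have hev := ((((e8.mul_left 81).sub (e6.mul_left 324)).sub (e4.mul_left 162)).sub
      (e2.mul_left 36))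
    have hodd3 : Odd (3*p^16) := (odd_one.add_even (by norm_num : Even (2:ℤ))).mul hpodd.pow
    have := hev.sub_odd hodd3
    rwa [show 81*(V^8) - 324*(V^6*p^4) - 162*(V^4*p^8) - 36*(V^2*p^12) - 3*p^16
      = 81*V^8 - 324*V^6*p^4 - 162*V^4*p^8 - 36*V^2*p^12 - 3*p^16 from by ring] at this
  -- coprimality facts
  have hp3 : IsCoprime p 3 := coprime_three h3
  have hpb : IsCoprime p (27*V^4 - p^8) := by
    have h1 : IsCoprime p (3^3 * V^4) := (hp3.pow_right).mul_right hco.pow_right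
    have := h1.add_mul_left_right (-(p^7))
    rwa [show 3^3 * V^4 + p * -(p^7) = 27*V^4 - p^8 from by ring] at this
  have hpE : IsCoprime p (81*V^8 - 324*V^6*p^4 - 162*V^4*p^8 - 36*V^2*p^12 - 3*p^16) := by
    have h1 : IsCoprime p (3^4 * V^8) := (hp3.pow_right).mul_right hco.pow_right
    have := h1.add_mul_left_right (-324*V^6*p^3 - 162*V^4*p^7 - 36*V^2*p^11 - 3*p^15)
    rwa [show 3^4 * V^8 + p * (-324*V^6*p^3 - 162*V^4*p^7 - 36*V^2*p^11 - 3*p^15)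
      = 81*V^8 - 324*V^6*p^4 - 162*V^4*p^8 - 36*V^2*p^12 - 3*p^16 from by ring] at this
  have hbV : IsCoprime (27*V^4 - p^8) V := by
    have h1 : IsCoprime V (-(p^8)) := (hco.symm.pow_right).neg_right
    have := h1.add_mul_left_right (27*V^3)
    rw [show -(p^8) + V * (27*V^3) = 27*V^4 - p^8 from by ring] at this
    exact this.symm
  have hb2 : IsCoprime (27*V^4 - p^8) 2 := coprime_two hbodd
  have hbp : IsCoprime (27*V^4 - p^8) p := hpb.symm
  have hb5 : IsCoprime (27*V^4 - p^8) (5*p^4 + 27*V^2) := by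
    have h2p8 : IsCoprime (27*V^4 - p^8) (2 * p^8) := hb2.mul_right (hbp.pow_right)
    rw [show 2 * p^8 = (5*p^4 + 27*V^2) * (27*V^2 - 5*p^4) + (27*V^4 - p^8) * (-27)
      from by ring] at h2p8
    have := h2p8.add_mul_left_right 27
    rw [show (5*p^4 + 27*V^2) * (27*V^2 - 5*p^4) + (27*V^4 - p^8) * (-27)
      + (27*V^4 - p^8) * 27 = (5*p^4 + 27*V^2) * (27*V^2 - 5*p^4) from by ring] at this
    exact this.of_mul_right_left
  have hbE : IsCoprime (27*V^4 - p^8)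
      (81*V^8 - 324*V^6*p^4 - 162*V^4*p^8 - 36*V^2*p^12 - 3*p^16) := by
    have hneg16 : IsCoprime (27*V^4 - p^8) (-16 : ℤ) := by
      have h16 : IsCoprime (27*V^4 - p^8) ((2:ℤ)^4) := hb2.pow_right
      have := h16.neg_right
      rwa [show -((2:ℤ)^4) = (-16 : ℤ) from by norm_num] at this
    have h16 : IsCoprime (27*V^4 - p^8) ((-16) * p^12 * (5*p^4 + 27*V^2)) :=
      (hneg16.mul_right (hbp.pow_right)).mul_right hb5
    have h9E := h16.add_mul_left_right (27*V^4 - 108*V^2*p^4 - 53*p^8)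
    rw [show (-16) * p^12 * (5*p^4 + 27*V^2)
        + (27*V^4 - p^8) * (27*V^4 - 108*V^2*p^4 - 53*p^8)
      = 9 * (81*V^8 - 324*V^6*p^4 - 162*V^4*p^8 - 36*V^2*p^12 - 3*p^16)
      from by ring] at h9E
    exact h9E.of_mul_right_right
  refine ⟨?_, hpodd.mul hbodd, hVeven.mul_right _,
    mul_ne_zero hVne (odd_ne_zero hEodd), ?_, ?_⟩
  · linear_combination (9*V^4 + 12*V^2*p^4 + p^8)^4 * heq
  · intro hdvd
    rcases (Int.prime_three.dvd_mul.mp hdvd) with h | h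
    · exact h3 h
    · have h27 : (3:ℤ) ∣ 27*V^4 := ⟨9*V^4, by ring⟩
      have hp8 : (3:ℤ) ∣ p^8 := by
        have := dvd_sub h27 h
        rwa [show 27*V^4 - (27*V^4 - p^8) = p^8 from by ring] at this
      exact h3 (Int.prime_three.dvd_of_dvd_pow hp8)
  · exact (hco.mul_right hpE).mul_left (hbV.mul_right hbE)

private lemma solSeq_inv (n : ℕ) :
    SolInv (solSeq n).1 (solSeq n).2.1 (solSeq n).2.2 := by
  induction n with
  | zero =>
    refine ⟨by norm_num [solSeq], ⟨0, by norm_num [solSeq]⟩, ⟨10, by norm_num [solSeq]⟩,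
      by norm_num [solSeq], by norm_num [solSeq], ?_⟩
    exact isCoprime_one_left
  | succ n ih =>
    show SolInv (solStep (solSeq n)).1 (solStep (solSeq n)).2.1 (solStep (solSeq n)).2.2
    exact solStep_inv ih

private lemma q_ne_zero {p q V : ℤ} (heq : q^4 = p^4 + 6*V^2) (hp0 : p ≠ 0) : q ≠ 0 := by
  intro hq
  rw [hq] at heq
  have h1 : p^4 ≠ 0 := pow_ne_zero _ hp0
  have h2 : 0 ≤ p^4 := by positivity
  have h3 : 0 ≤ V^2 := sq_nonneg V
  norm_num at heq
  omega

private lemma quad_mem {p q V : ℤ} (h : SolInv p q V) :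
    ((V + p^2, V - p^2, p * q, V) : ℤ × ℤ × ℤ × ℤ) ∈ {q : ℤ × ℤ × ℤ × ℤ |
      q.1 * q.2.1 * q.2.2.1 * q.2.2.2 ≠ 0 ∧
      Int.gcd (Int.gcd (Int.gcd q.1 q.2.1) q.2.2.1) q.2.2.2 = 1 ∧
      q.1 ^ 4 + q.2.1 ^ 4 = 2 * (q.2.2.1 ^ 4 + q.2.2.2 ^ 4)} := by
  obtain ⟨heq, hpodd, hVeven, hVne, h3, hco⟩ := h
  have hp0 : p ≠ 0 := odd_ne_zero hpodd
  have hq0 : q ≠ 0 := q_ne_zero heq hp0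
  have hXodd : Odd (V + p^2) := hVeven.add_odd (hpodd.pow)
  have hYodd : Odd (V - p^2) := hVeven.sub_odd (hpodd.pow)
  refine ⟨?_, ?_, ?_⟩
  · show (V + p^2) * (V - p^2) * (p * q) * V ≠ 0
    exact mul_ne_zero (mul_ne_zero (mul_ne_zero (odd_ne_zero hXodd) (odd_ne_zero hYodd))
      (mul_ne_zero hp0 hq0)) hVne
  · show Int.gcd (Int.gcd (Int.gcd (V + p^2) (V - p^2)) (p * q)) V = 1
    set g : ℕ := Int.gcd (Int.gcd (Int.gcd (V + p^2) (V - p^2)) (p * q)) V with hg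
    have hgV : (g:ℤ) ∣ V := Int.gcd_dvd_right _ _
    have hgX : (g:ℤ) ∣ (V + p^2) := by
      have h1 : (g:ℤ) ∣ (Int.gcd (Int.gcd (V + p^2) (V - p^2)) (p * q) : ℤ) :=
        Int.gcd_dvd_left _ _
      have h2 : ((Int.gcd (Int.gcd (V + p^2) (V - p^2)) (p * q) : ℕ) : ℤ) ∣
          (Int.gcd (V + p^2) (V - p^2) : ℤ) := Int.gcd_dvd_left _ _
      exact h1.trans (h2.trans (Int.gcd_dvd_left _ _))
    have hgp2 : (g:ℤ) ∣ p^2 := by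
      have := dvd_sub hgX hgV
      rwa [show V + p^2 - V = p^2 from by ring] at this
    obtain ⟨u, v, huv⟩ := (hco.pow_left : IsCoprime (p^2) V)
    have hone : (g:ℤ) ∣ 1 := by
      rw [← huv]
      exact dvd_add (Dvd.dvd.mul_left hgp2 u) (Dvd.dvd.mul_left hgV v)
    have := Int.eq_one_of_dvd_one (by positivity) hone
    exact_mod_cast this
  · show (V + p^2) ^ 4 + (V - p^2) ^ 4 = 2 * ((p * q) ^ 4 + V ^ 4)
    linear_combination (-2*p^4) * heq

private lemma solSeq_U_lt (n : ℕ) :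
    ((solSeq n).1 * (solSeq n).2.1).natAbs <
      ((solSeq (n+1)).1 * (solSeq (n+1)).2.1).natAbs := by
  obtain ⟨heq, hpodd, hVeven, hVne, h3, hco⟩ := solSeq_inv n
  set p := (solSeq n).1
  set q := (solSeq n).2.1
  set V := (solSeq n).2.2
  have hp0 : p ≠ 0 := odd_ne_zero hpodd
  have hq0 : q ≠ 0 := q_ne_zero heq hp0
  have hV2 : 4 ≤ V^2 := by
    rcases hVeven with ⟨k, hk⟩
    have hk0 : k ≠ 0 := by rintro rfl; simp at hk; exact hVne hk
    have hk1 : 0 < k^2 := by positivity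
    have hVk : V^2 = 4 * k^2 := by rw [hk]; ring
    omega
  have ha : (144:ℤ) ≤ 9*V^4 + 12*V^2*p^4 + p^8 := by
    nlinarith [sq_nonneg (p^2), sq_nonneg (p^4), mul_nonneg (sq_nonneg V) (sq_nonneg (p^2)),
      sq_nonneg (V^2 - 4)]
  have hVeven4 : Even (V^4) := Int.even_pow.mpr ⟨hVeven, by norm_num⟩
  have hbodd : Odd (27*V^4 - p^8) := (hVeven4.mul_left 27).sub_odd hpodd.pow
  have hb0 : (27*V^4 - p^8) ≠ 0 := odd_ne_zero hbodd
  have key : ((solSeq (n+1)).1 * (solSeq (n+1)).2.1).natAbs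
      = (p * q).natAbs * ((9*V^4 + 12*V^2*p^4 + p^8) * (27*V^4 - p^8)).natAbs := by
    have hstep : (solSeq (n+1)).1 * (solSeq (n+1)).2.1
        = (p * q) * ((9*V^4 + 12*V^2*p^4 + p^8) * (27*V^4 - p^8)) := by
      show (solStep (solSeq n)).1 * (solStep (solSeq n)).2.1 = _
      simp only [solStep]
      ring
    rw [hstep, Int.natAbs_mul]
  rw [key]
  have hpq : 0 < (p * q).natAbs := Int.natAbs_pos.mpr (mul_ne_zero hp0 hq0)
  have ha' : 2 ≤ (9*V^4 + 12*V^2*p^4 + p^8).natAbs := by omega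
  have hb' : 1 ≤ (27*V^4 - p^8).natAbs := Int.natAbs_pos.mpr hb0
  have h2 : 2 ≤ ((9*V^4 + 12*V^2*p^4 + p^8) * (27*V^4 - p^8)).natAbs := by
    rw [Int.natAbs_mul]
    nlinarith
  nlinarith

theorem infinitely_many_primitive_solutions :
    {q : ℤ × ℤ × ℤ × ℤ |
      q.1 * q.2.1 * q.2.2.1 * q.2.2.2 ≠ 0 ∧
      Int.gcd (Int.gcd (Int.gcd q.1 q.2.1) q.2.2.1) q.2.2.2 = 1 ∧
      q.1 ^ 4 + q.2.1 ^ 4 = 2 * (q.2.2.1 ^ 4 + q.2.2.2 ^ 4)}.Infinite := by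
  have hmono : StrictMono (fun n => ((solSeq n).1 * (solSeq n).2.1).natAbs) :=
    strictMono_nat_of_lt_succ solSeq_U_lt
  have hinj : Function.Injective (fun n => (((solSeq n).2.2 + (solSeq n).1^2,
      (solSeq n).2.2 - (solSeq n).1^2, (solSeq n).1 * (solSeq n).2.1,
      (solSeq n).2.2) : ℤ × ℤ × ℤ × ℤ)) := by
    intro m n hmn
    simp only [Prod.mk.injEq] at hmn
    have h3 : (solSeq m).1 * (solSeq m).2.1 = (solSeq n).1 * (solSeq n).2.1 :=
      hmn.2.2.1
    exact hmono.injective (by rw [h3] : ((solSeq m).1 * (solSeq m).2.1).natAbs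
      = ((solSeq n).1 * (solSeq n).2.1).natAbs)
  exact Set.infinite_of_injective_forall_mem hinj (fun n => quad_mem (solSeq_inv n))
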